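/- For every complex-valued Schwartz function φ on ℝ with φ(x) = 0 for all x ≤ 0, the function y ↦ φ((y + √(y² + 4))/2) is a Schwartz function on ℝ. -/

import Mathlib

open Complex SchwartzMap

noncomputable section AuxChart

/-- The partial-fraction function `t ↦ t²/(1+t²)` written with complex poles. -/
def pfG : ℝ → ℂ := fun t =>
  1 + (-(2 * Complex.I)⁻¹) * ((t : ℂ) + -Complex.I) ^ (-1 : ℤ)
    + (2 * Complex.I)⁻¹ * ((t : ℂ) + Complex.I) ^ (-1 : ℤ)

lemma one_le_norm_add_I (t : ℝ) (c : ℂ) (hc : c = Complex.I ∨ c = -Complex.I) :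
    1 ≤ ‖(t : ℂ) + c‖ := by
  have h : ‖(t : ℂ) + c‖ ^ 2 = t ^ 2 + 1 := by
    rcases hc with rfl | rfl <;>
      · rw [Complex.sq_norm]
        simp [Complex.normSq_apply]
        ring
  nlinarith [norm_nonneg ((t : ℂ) + c), sq_nonneg t]

lemma add_I_ne_zero (t : ℝ) (c : ℂ) (hc : c = Complex.I ∨ c = -Complex.I) :
    (t : ℂ) + c ≠ 0 := by
  intro h
  have := one_le_norm_add_I t c hc
  rw [h] at this
  simp at this
  linarith

lemma norm_zpow_le_one (t : ℝ) (c : ℂ) (hc : c = Complex.I ∨ c = -Complex.I) (m : ℕ) :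
    ‖((t : ℂ) + c) ^ (-(m + 1 : ℕ) : ℤ)‖ ≤ 1 := by
  rw [norm_zpow, zpow_neg, zpow_natCast]
  exact inv_le_one_of_one_le₀ (one_le_pow₀ (one_le_norm_add_I t c hc))

lemma pole_hasDerivAt (c : ℂ) (hc : c = Complex.I ∨ c = -Complex.I) (k : ℤ) (t : ℝ) :
    HasDerivAt (fun t : ℝ => ((t : ℂ) + c) ^ k) ((k : ℂ) * ((t : ℂ) + c) ^ (k - 1)) t := by
  have h1 : HasDerivAt (fun t : ℝ => (t : ℂ) + c) 1 t := by
    simpa using (Complex.ofRealCLM.hasDerivAt (x := t)).add_const c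
  have h2 := hasDerivAt_zpow k ((t : ℂ) + c) (Or.inl (add_I_ne_zero t c hc))
  have h3 := h2.comp t h1
  rw [mul_one] at h3
  exact h3

lemma contDiff_pole (c : ℂ) (hc : c = Complex.I ∨ c = -Complex.I) :
    ContDiff ℝ ((⊤ : ℕ∞) : WithTop ℕ∞) (fun t : ℝ => ((t : ℂ) + c) ^ (-1 : ℤ)) := by
  have : ∀ t : ℝ, ((t : ℂ) + c) ^ (-1 : ℤ) = ((t : ℂ) + c)⁻¹ := by
    intro t; simp [zpow_neg]
  simp only [this]
  exact (Complex.ofRealCLM.contDiff.add contDiff_const).inv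
    (fun t => add_I_ne_zero t c hc)

lemma pfG_contDiff : ContDiff ℝ ((⊤ : ℕ∞) : WithTop ℕ∞) pfG := by
  unfold pfG
  exact ((contDiff_const.add ((contDiff_pole _ (Or.inr rfl)).const_smul
    (-(2 * Complex.I)⁻¹))).add ((contDiff_pole _ (Or.inl rfl)).const_smul
    ((2 * Complex.I)⁻¹)))

lemma norm_inv_two_I : ‖(2 * Complex.I)⁻¹‖ = 1/2 := by
  rw [norm_inv, norm_mul, Complex.norm_I]
  norm_num

lemma pfG_iteratedDeriv (n : ℕ) :
    ∃ a b : ℂ, ‖a‖ ≤ (n + 1).factorial ∧ ‖b‖ ≤ (n + 1).factorial ∧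
      iteratedDeriv (n + 1) pfG =
        fun t : ℝ => a * ((t : ℂ) + -Complex.I) ^ (-(n + 2 : ℕ) : ℤ)
          + b * ((t : ℂ) + Complex.I) ^ (-(n + 2 : ℕ) : ℤ) := by
  induction n with
  | zero =>
    refine ⟨(2 * Complex.I)⁻¹, -(2 * Complex.I)⁻¹, ?_, ?_, ?_⟩
    · rw [show ((0 + 1 : ℕ).factorial : ℝ) = 1 by norm_num, norm_inv_two_I]; norm_num
    · rw [show ((0 + 1 : ℕ).factorial : ℝ) = 1 by norm_num, norm_neg, norm_inv_two_I]; norm_num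
    · rw [iteratedDeriv_one]
      funext t
      have h1 := (pole_hasDerivAt (-Complex.I) (Or.inr rfl) (-1) t).const_mul
        (-(2 * Complex.I)⁻¹)
      have h2 := (pole_hasDerivAt Complex.I (Or.inl rfl) (-1) t).const_mul
        ((2 * Complex.I)⁻¹)
      have h := ((hasDerivAt_const t (1 : ℂ)).add h1).add h2
      have h' : HasDerivAt pfG
          ((0 + -(2 * Complex.I)⁻¹ * (((-1 : ℤ) : ℂ) * ((t : ℂ) + -Complex.I) ^ (-1 - 1 : ℤ)))
            + (2 * Complex.I)⁻¹ * (((-1 : ℤ) : ℂ) * ((t : ℂ) + Complex.I) ^ (-1 - 1 : ℤ))) t := h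
      rw [h'.deriv]
      have e1 : (-1 - 1 : ℤ) = (-(0 + 2 : ℕ) : ℤ) := by norm_num
      rw [e1]
      push_cast
      ring
  | succ n ih =>
    obtain ⟨a, b, ha, hb, heq⟩ := ih
    have hnormc : ‖((-(n + 2 : ℕ) : ℤ) : ℂ)‖ = (n + 2 : ℝ) := by
      have : ((-(n + 2 : ℕ) : ℤ) : ℂ) = -((n + 2 : ℕ) : ℂ) := by push_cast; ring
      rw [this, norm_neg, Complex.norm_natCast]
      push_cast; ring
    have hfact : ((n + 1).factorial : ℝ) * (n + 2) = ((n + 1 + 1).factorial : ℝ) := by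
      rw [Nat.factorial_succ (n + 1)]
      push_cast; ring
    refine ⟨a * ((-(n + 2 : ℕ) : ℤ) : ℂ), b * ((-(n + 2 : ℕ) : ℤ) : ℂ), ?_, ?_, ?_⟩
    · rw [norm_mul, hnormc, ← hfact]
      gcongr
    · rw [norm_mul, hnormc, ← hfact]
      gcongr
    · rw [iteratedDeriv_succ, heq]
      funext t
      have h1 := (pole_hasDerivAt (-Complex.I) (Or.inr rfl) (-(n + 2 : ℕ) : ℤ) t).const_mul a
      have h2 := (pole_hasDerivAt Complex.I (Or.inl rfl) (-(n + 2 : ℕ) : ℤ) t).const_mul b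
      have h := h1.add h2
      rw [show deriv (fun t : ℝ => a * ((t : ℂ) + -Complex.I) ^ (-(n + 2 : ℕ) : ℤ)
          + b * ((t : ℂ) + Complex.I) ^ (-(n + 2 : ℕ) : ℤ)) t = _ from h.deriv]
      have e1 : ((-(n + 2 : ℕ) : ℤ) - 1 : ℤ) = (-(n + 1 + 2 : ℕ) : ℤ) := by push_cast; ring
      rw [e1]
      ring

lemma pfG_htg : Function.HasTemperateGrowth pfG := by
  refine ⟨pfG_contDiff, fun n => ⟨0, ?_⟩⟩
  match n with
  | 0 =>
    refine ⟨2, fun x => ?_⟩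
    rw [pow_zero, mul_one, norm_iteratedFDeriv_zero]
    have b1 : ‖((x : ℂ) + -Complex.I) ^ (-1 : ℤ)‖ ≤ 1 := by
      simpa using norm_zpow_le_one x (-Complex.I) (Or.inr rfl) 0
    have b2 : ‖((x : ℂ) + Complex.I) ^ (-1 : ℤ)‖ ≤ 1 := by
      simpa using norm_zpow_le_one x Complex.I (Or.inl rfl) 0
    have step : ‖pfG x‖ ≤ ‖(1 : ℂ)‖
        + ‖-(2 * Complex.I)⁻¹‖ * ‖((x : ℂ) + -Complex.I) ^ (-1 : ℤ)‖
        + ‖(2 * Complex.I)⁻¹‖ * ‖((x : ℂ) + Complex.I) ^ (-1 : ℤ)‖ := by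
      refine (norm_add_le _ _).trans ?_
      rw [norm_mul]
      gcongr
      refine (norm_add_le _ _).trans ?_
      rw [norm_mul]
    refine step.trans ?_
    rw [norm_one, norm_neg, norm_inv_two_I]
    nlinarith [norm_nonneg ((x : ℂ) + -Complex.I), norm_nonneg ((x : ℂ) + Complex.I)]
  | (n + 1) =>
    obtain ⟨a, b, ha, hb, heq⟩ := pfG_iteratedDeriv n
    refine ⟨2 * (n + 1).factorial, fun x => ?_⟩
    rw [pow_zero, mul_one, norm_iteratedFDeriv_eq_norm_iteratedDeriv, heq]
    have b1 : ‖((x : ℂ) + -Complex.I) ^ (-(n + 2 : ℕ) : ℤ)‖ ≤ 1 := by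
      exact norm_zpow_le_one x (-Complex.I) (Or.inr rfl) (n + 1)
    have b2 : ‖((x : ℂ) + Complex.I) ^ (-(n + 2 : ℕ) : ℤ)‖ ≤ 1 := by
      exact norm_zpow_le_one x Complex.I (Or.inl rfl) (n + 1)
    have hfa : (0 : ℝ) ≤ (n + 1).factorial := by positivity
    calc ‖a * ((x : ℂ) + -Complex.I) ^ (-(n + 2 : ℕ) : ℤ)
          + b * ((x : ℂ) + Complex.I) ^ (-(n + 2 : ℕ) : ℤ)‖
        ≤ ‖a‖ * ‖((x : ℂ) + -Complex.I) ^ (-(n + 2 : ℕ) : ℤ)‖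
          + ‖b‖ * ‖((x : ℂ) + Complex.I) ^ (-(n + 2 : ℕ) : ℤ)‖ := by
          refine (norm_add_le _ _).trans ?_
          rw [norm_mul, norm_mul]
      _ ≤ ((n + 1).factorial : ℝ) * 1 + ((n + 1).factorial : ℝ) * 1 := by
          gcongr
      _ = 2 * (n + 1).factorial := by ring

lemma pfG_eq (t : ℝ) : pfG t = ((t ^ 2 / (1 + t ^ 2) : ℝ) : ℂ) := by
  have h1 : (t : ℂ) + -Complex.I ≠ 0 := add_I_ne_zero t _ (Or.inr rfl)
  have h2 : (t : ℂ) + Complex.I ≠ 0 := add_I_ne_zero t _ (Or.inl rfl)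
  have h3 : (1 : ℂ) + (t : ℂ) ^ 2 ≠ 0 := by
    intro h
    have h4 : (1 + t ^ 2 : ℝ) = 0 := by
      exact_mod_cast (by push_cast; linear_combination h : ((1 + t ^ 2 : ℝ) : ℂ) = 0)
    nlinarith [sq_nonneg t]
  unfold pfG
  rw [zpow_neg_one, zpow_neg_one]
  push_cast
  field_simp
  ring_nf
  simp [Complex.I_sq]

/-- The inverse chart `τ y = (y + √(y²+4))/2`. -/
def tauC (y : ℝ) : ℝ := (y + Real.sqrt (y ^ 2 + 4)) / 2

lemma sq_sqrt4 (y : ℝ) : Real.sqrt (y ^ 2 + 4) ^ 2 = y ^ 2 + 4 :=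
  Real.sq_sqrt (by positivity)

lemma sqrt4_nonneg (y : ℝ) : 0 ≤ Real.sqrt (y ^ 2 + 4) := Real.sqrt_nonneg _

lemma tauC_pos (y : ℝ) : 0 < tauC y := by
  unfold tauC
  nlinarith [sq_sqrt4 y, sqrt4_nonneg y, sq_nonneg (y + Real.sqrt (y ^ 2 + 4))]

lemma tauC_mul (y : ℝ) : tauC y * ((Real.sqrt (y ^ 2 + 4) - y) / 2) = 1 := by
  unfold tauC
  nlinarith [sq_sqrt4 y]

lemma tauC_sub_inv (y : ℝ) : tauC y - (tauC y)⁻¹ = y := by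
  have h := (tauC_pos y).ne'
  have h2 : (tauC y)⁻¹ = (Real.sqrt (y ^ 2 + 4) - y) / 2 :=
    (eq_inv_of_mul_eq_one_right (tauC_mul y)).symm
  rw [h2]; unfold tauC; ring

lemma abs_le_tauC (y : ℝ) : |y| ≤ tauC y + (tauC y)⁻¹ := by
  have h1 := tauC_pos y
  have h2 : 0 < (tauC y)⁻¹ := by positivity
  have h3 := tauC_sub_inv y
  rcases abs_cases y with ⟨h, _⟩ | ⟨h, _⟩ <;> rw [h] <;> linarith

lemma tauC_contDiff : ContDiff ℝ ((⊤ : ℕ∞) : WithTop ℕ∞) tauC := by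
  unfold tauC
  refine (contDiff_id.add ?_).div_const 2
  rw [contDiff_iff_contDiffAt]
  intro y
  exact ContDiffAt.sqrt (by fun_prop) (by positivity)

lemma tauC_hasDerivAt (y : ℝ) :
    HasDerivAt tauC ((1 + y / Real.sqrt (y ^ 2 + 4)) / 2) y := by
  have hs : Real.sqrt (y ^ 2 + 4) ≠ 0 := by
    have := sq_sqrt4 y; nlinarith [sqrt4_nonneg y]
  have hin : HasDerivAt (fun y : ℝ => y ^ 2 + 4) (2 * y) y := by
    simpa using (hasDerivAt_pow 2 y).add_const 4
  have hsq := (Real.hasDerivAt_sqrt (by positivity : y ^ 2 + 4 ≠ 0)).comp y hin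
  have h := ((hasDerivAt_id y).add hsq).div_const 2
  refine h.congr_deriv ?_
  field_simp

lemma tauC_deriv_eq (y : ℝ) :
    (1 + y / Real.sqrt (y ^ 2 + 4)) / 2 = tauC y ^ 2 / (1 + tauC y ^ 2) := by
  have hs2 := sq_sqrt4 y
  have hs : 0 < Real.sqrt (y ^ 2 + 4) := by nlinarith [sqrt4_nonneg y]
  have ht : 0 < tauC y := tauC_pos y
  have hkey : 1 + tauC y ^ 2 = Real.sqrt (y ^ 2 + 4) * tauC y := by
    unfold tauC; nlinarith [hs2]
  rw [hkey]
  have h1 : 1 + tauC y ^ 2 ≠ 0 := by positivity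
  field_simp
  unfold tauC
  ring

/-- The operator `ψ ↦ (deriv ψ) · pfG` on Schwartz space. -/
def Dop (ψ : SchwartzMap ℝ ℂ) : SchwartzMap ℝ ℂ :=
  SchwartzMap.bilinLeftCLM (ContinuousLinearMap.mul ℝ ℂ) pfG_htg (SchwartzMap.derivCLM ℝ ℂ ψ)

lemma Dop_apply (ψ : SchwartzMap ℝ ℂ) (x : ℝ) : Dop ψ x = deriv (⇑ψ) x * pfG x := rfl

lemma comp_deriv (ψ : SchwartzMap ℝ ℂ) :
    deriv (fun y => ψ (tauC y)) = fun y => Dop ψ (tauC y) := by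
  funext y
  have hψ : HasDerivAt (⇑ψ) (deriv (⇑ψ) (tauC y)) (tauC y) :=
    (ψ.differentiableAt).hasDerivAt
  have h : HasDerivAt (fun y => ψ (tauC y))
      (((1 + y / Real.sqrt (y ^ 2 + 4)) / 2) • deriv (⇑ψ) (tauC y)) y :=
    hψ.scomp y (tauC_hasDerivAt y)
  rw [h.deriv, Dop_apply, pfG_eq, ← tauC_deriv_eq y]
  rw [Complex.real_smul]
  ring

lemma deriv_vanish (ψ : SchwartzMap ℝ ℂ) (h : ∀ x ≤ 0, ψ x = 0) :
    ∀ x ≤ 0, deriv (⇑ψ) x = 0 := by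
  have hneg : ∀ t < (0 : ℝ), deriv (⇑ψ) t = 0 := by
    intro t ht
    have he : (⇑ψ) =ᶠ[nhds t] fun _ => (0 : ℂ) := by
      filter_upwards [Iio_mem_nhds ht] with u hu
      exact h u (le_of_lt hu)
    rw [he.deriv_eq, deriv_const]
  have hcont : Continuous (deriv (⇑ψ)) := by
    have h1 := (SchwartzMap.derivCLM ℝ ℂ ψ).continuous
    have h2 : ⇑(SchwartzMap.derivCLM ℝ ℂ ψ) = deriv (⇑ψ) :=
      funext fun x => SchwartzMap.derivCLM_apply ℝ ψ x
    rwa [h2] at h1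
  intro x hx
  rcases lt_or_eq_of_le hx with hlt | heq
  · exact hneg x hlt
  · subst heq
    have h1 : Filter.Tendsto (deriv (⇑ψ)) (nhdsWithin 0 (Set.Iio 0))
        (nhds (deriv (⇑ψ) 0)) := (hcont.tendsto 0).mono_left nhdsWithin_le_nhds
    have h2 : Filter.Tendsto (deriv (⇑ψ)) (nhdsWithin 0 (Set.Iio 0)) (nhds 0) := by
      refine Filter.Tendsto.congr' ?_ tendsto_const_nhds
      filter_upwards [self_mem_nhdsWithin] with t ht
      exact (hneg t ht).symm
    exact tendsto_nhds_unique h1 h2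

lemma flat : ∀ (k : ℕ) (ψ : SchwartzMap ℝ ℂ), (∀ x ≤ 0, ψ x = 0) →
    ∃ C, 0 ≤ C ∧ ∀ t : ℝ, 0 ≤ t → t ≤ 1 → ‖ψ t‖ ≤ C * t ^ k := by
  intro k
  induction k with
  | zero =>
    intro ψ _
    obtain ⟨C, hC, hCb⟩ := ψ.decay 0 0
    refine ⟨C, hC.le, fun t _ _ => ?_⟩
    have := hCb t
    simpa using this
  | succ k ih =>
    intro ψ h
    obtain ⟨C, hC0, hC⟩ := ih (SchwartzMap.derivCLM ℝ ℂ ψ)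
      (fun x hx => by rw [SchwartzMap.derivCLM_apply]; exact deriv_vanish ψ h x hx)
    refine ⟨C, hC0, fun t ht0 ht1 => ?_⟩
    have hd : ∀ x ∈ Set.Icc (0 : ℝ) t, DifferentiableAt ℝ (⇑ψ) x :=
      fun x _ => ψ.differentiableAt
    have hb : ∀ x ∈ Set.Icc (0 : ℝ) t, ‖deriv (⇑ψ) x‖ ≤ C * t ^ k := by
      intro x hx
      have hx1 := hC x hx.1 (hx.2.trans ht1)
      rw [SchwartzMap.derivCLM_apply] at hx1
      calc ‖deriv (⇑ψ) x‖ ≤ C * x ^ k := hx1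
        _ ≤ C * t ^ k := by gcongr <;> [exact hx.1; exact hx.2]
    have hm := Convex.norm_image_sub_le_of_norm_deriv_le hd hb (convex_Icc 0 t)
      (Set.left_mem_Icc.mpr ht0) (Set.right_mem_Icc.mpr ht0)
    calc ‖ψ t‖ = ‖ψ t - ψ 0‖ := by rw [h 0 le_rfl, sub_zero]
      _ ≤ C * t ^ k * ‖t - 0‖ := hm
      _ = C * t ^ (k + 1) := by
          rw [sub_zero, Real.norm_eq_abs, _root_.abs_of_nonneg ht0]; ring

lemma key_bound (ψ : SchwartzMap ℝ ℂ) (h : ∀ x ≤ 0, ψ x = 0) (k : ℕ) :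
    ∃ C, ∀ t : ℝ, 0 < t → (t + t⁻¹) ^ k * ‖ψ t‖ ≤ C := by
  obtain ⟨C₁, hC₁0, hC₁⟩ := ψ.decay k 0
  obtain ⟨C₀, hC₀0, hC₀⟩ := ψ.decay 0 0
  obtain ⟨C₂, hC₂0, hC₂⟩ := flat k ψ h
  refine ⟨2 ^ k * (C₁ + (C₀ + C₂)), fun t ht => ?_⟩
  have ht' : 0 < t⁻¹ := by positivity
  have hψb : ‖ψ t‖ ≤ C₀ := by simpa using hC₀ t
  have h1 : t ^ k * ‖ψ t‖ ≤ C₁ := by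
    have := hC₁ t
    simpa [abs_of_pos ht] using this
  have h2 : t⁻¹ ^ k * ‖ψ t‖ ≤ C₀ + C₂ := by
    rcases le_or_gt t 1 with hle | hgt
    · calc t⁻¹ ^ k * ‖ψ t‖ ≤ t⁻¹ ^ k * (C₂ * t ^ k) := by
            gcongr
            exact hC₂ t ht.le hle
        _ = C₂ * (t⁻¹ * t) ^ k := by rw [mul_pow]; ring
        _ = C₂ := by rw [inv_mul_cancel₀ ht.ne', one_pow, mul_one]
        _ ≤ C₀ + C₂ := by linarith
    · have hinv : t⁻¹ ^ k ≤ 1 :=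
        pow_le_one₀ ht'.le (inv_le_one_of_one_le₀ hgt.le)
      calc t⁻¹ ^ k * ‖ψ t‖ ≤ 1 * C₀ :=
            mul_le_mul hinv hψb (norm_nonneg _) one_pos.le
        _ = C₀ := one_mul _
        _ ≤ C₀ + C₂ := by linarith
  have hmax : t + t⁻¹ ≤ 2 * max t t⁻¹ := by
    have := le_max_left t t⁻¹
    have := le_max_right t t⁻¹
    linarith
  have h3 : (t + t⁻¹) ^ k ≤ 2 ^ k * (t ^ k + t⁻¹ ^ k) := by
    calc (t + t⁻¹) ^ k ≤ (2 * max t t⁻¹) ^ k := by gcongr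
      _ = 2 ^ k * (max t t⁻¹) ^ k := by rw [mul_pow]
      _ ≤ 2 ^ k * (t ^ k + t⁻¹ ^ k) := by
          gcongr
          rcases max_cases t t⁻¹ with ⟨hm, _⟩ | ⟨hm, _⟩ <;> rw [hm] <;>
            [exact le_add_of_nonneg_right (by positivity);
             exact le_add_of_nonneg_left (by positivity)]
  calc (t + t⁻¹) ^ k * ‖ψ t‖ ≤ (2 ^ k * (t ^ k + t⁻¹ ^ k)) * ‖ψ t‖ := by gcongr
    _ = 2 ^ k * (t ^ k * ‖ψ t‖ + t⁻¹ ^ k * ‖ψ t‖) := by ring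
    _ ≤ 2 ^ k * (C₁ + (C₀ + C₂)) := by gcongr

lemma Dop_iter_vanish (φ : SchwartzMap ℝ ℂ) (hφ : ∀ x ≤ 0, φ x = 0) :
    ∀ n, ∀ x ≤ 0, (Dop^[n] φ) x = 0 := by
  intro n
  induction n with
  | zero => simpa using hφ
  | succ n ih =>
    intro x hx
    rw [Function.iterate_succ_apply', Dop_apply]
    rw [deriv_vanish (Dop^[n] φ) ih x hx, zero_mul]

lemma iter_eq (φ : SchwartzMap ℝ ℂ) :
    ∀ n, iteratedDeriv n (fun y => φ (tauC y)) = fun y => (Dop^[n] φ) (tauC y) := by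
  intro n
  induction n with
  | zero => simp [iteratedDeriv_zero]
  | succ n ih =>
    rw [iteratedDeriv_succ, ih, comp_deriv (Dop^[n] φ)]
    funext y
    rw [Function.iterate_succ_apply' Dop n φ]

end AuxChart

/-- For any Schwartz function `φ` on `ℝ` vanishing on `(-∞,0]`, the function
`y ↦ φ ((y + √(y² + 4)) / 2)` is a Schwartz function on `ℝ`. -/
theorem schwartz_comp_inverse_chart_of_vanishing_nonpos (φ : SchwartzMap ℝ ℂ)
    (hφ : ∀ x : ℝ, x ≤ 0 → φ x = 0) :
    ∃ Ψ : SchwartzMap ℝ ℂ, ∀ y : ℝ, Ψ y = φ ((y + Real.sqrt (y ^ 2 + 4)) / 2) := by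
  have hφ' : ∀ x ≤ 0, φ x = 0 := hφ
  refine ⟨⟨fun y => φ (tauC y), φ.smooth'.comp tauC_contDiff, ?_⟩, fun y => rfl⟩
  intro k n
  obtain ⟨C, hC⟩ := key_bound (Dop^[n] φ) (Dop_iter_vanish φ hφ' n) k
  refine ⟨C, fun y => ?_⟩
  rw [norm_iteratedFDeriv_eq_norm_iteratedDeriv, iter_eq φ n]
  have h1 : ‖y‖ ^ k ≤ (tauC y + (tauC y)⁻¹) ^ k := by
    apply pow_le_pow_left₀ (norm_nonneg y)
    rw [Real.norm_eq_abs]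
    exact abs_le_tauC y
  calc ‖y‖ ^ k * ‖(Dop^[n] φ) (tauC y)‖
      ≤ (tauC y + (tauC y)⁻¹) ^ k * ‖(Dop^[n] φ) (tauC y)‖ := by gcongr
    _ ≤ C := hC (tauC y) (tauC_pos y)
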